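/- Let Γ be a countable residually finite discrete group and f ∈ ℤΓ such that the action α_f on X_f is expansive, i.e. f is invertible in ℓ¹(Γ) with inverse w_f^Δ = f⁻¹. Then the point x_f^Δ = η((w_f^Δ)*) ∈ X_f is a fundamental homoclinic point of α_f. -/

import Mathlib

open scoped BigOperators symmDiff Pointwise

noncomputable section

/-- The additive circle `𝕋 = ℝ/ℤ`. -/
abbrev Torus : Type := AddCircle (1 : ℝ)

section GroupDefs

variable {Γ : Type*} [Group Γ]

/-- For `f ∈ ℤΓ`, the map `ρ_f : 𝕋^Γ → 𝕋^Γ`, `(ρ_f x)_{γ'} = Σ_γ f_γ • x_{γ'γ}`. -/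
def rhoT (f : Γ →₀ ℤ) (x : Γ → Torus) : Γ → Torus :=
  fun γ' => f.sum fun γ c => c • x (γ' * γ)

/-- The compact abelian group `X_f = ker ρ_f ⊆ 𝕋^Γ` (as a subset). -/
def XSet (f : Γ →₀ ℤ) : Set (Γ → Torus) := {x | rhoT f x = 0}

/-- The left shift `(λ^γ x)_{γ'} = x_{γ⁻¹ γ'}` on `𝕋^Γ`; restricted to `X_f` this is `α_f^γ`. -/
def lsh (γ : Γ) (x : Γ → Torus) : Γ → Torus := fun γ' => x (γ⁻¹ * γ')

/-- The left shift `(λ^γ w)_{γ'} = w_{γ⁻¹ γ'}` on real-valued functions. -/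
def lshR (γ : Γ) (w : Γ → ℝ) : Γ → ℝ := fun γ' => w (γ⁻¹ * γ')

/-- Expansiveness of the `Γ`-action `α_f` on `X_f`: there is an open neighbourhood `U`
of `0` such that the only point of `X_f` all of whose translates stay in `U` is `0`
(equivalently, `⋂_γ α_f^γ (U ∩ X_f) = {0}`). -/
def ExpansiveAction (f : Γ →₀ ℤ) : Prop :=
  ∃ U : Set (Γ → Torus), IsOpen U ∧ {x | x ∈ XSet f ∧ ∀ γ : Γ, lsh γ x ∈ U} = {0}

/-- `w ∈ ℓ∞(Γ)`: boundedness of a real-valued function. -/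
def Bdd (w : Γ → ℝ) : Prop := ∃ C : ℝ, ∀ γ : Γ, |w γ| ≤ C

/-- `w ∈ ℓ∞(Γ,ℤ)`: all values are integers. -/
def IntValued (w : Γ → ℝ) : Prop := ∀ γ : Γ, ∃ k : ℤ, w γ = (k : ℝ)

/-- For `f ∈ ℤΓ`, the operator `ρ_f` on `ℓ∞(Γ)`: `(ρ_f w)_γ = Σ_{γ'} w_{γγ'} f_{γ'}`. -/
def rhoInf (f : Γ →₀ ℤ) (w : Γ → ℝ) : Γ → ℝ :=
  fun γ => f.sum fun γ' c => (c : ℝ) * w (γ * γ')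

/-- For `h ∈ ℓ¹(Γ)`, the operator `ρ_h` on `ℓ∞(Γ)`: `(ρ_h w)_γ = Σ_{γ'} w_{γγ'} h_{γ'}`. -/
def rhoL1 (h : Γ → ℝ) (w : Γ → ℝ) : Γ → ℝ :=
  fun γ => ∑' γ' : Γ, w (γ * γ') * h γ'

/-- Convolution on `ℓ¹(Γ)`: `(g·h)_γ = Σ_{γ'} g_{γ'} h_{γ'⁻¹γ}`. -/
def conv (g h : Γ → ℝ) : Γ → ℝ := fun γ => ∑' γ' : Γ, g γ' * h (γ'⁻¹ * γ)

/-- Convolution on `ℓ¹(Γ,ℂ)`. -/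
def convC (g h : Γ → ℂ) : Γ → ℂ := fun γ => ∑' γ' : Γ, g γ' * h (γ'⁻¹ * γ)

open Classical in
/-- The unit `δ₁` of the convolution algebra `ℓ¹(Γ)`. -/
def deltaOne : Γ → ℝ := fun γ => if γ = 1 then 1 else 0

open Classical in
/-- The unit `δ₁` of `ℓ¹(Γ,ℂ)`. -/
def deltaOneC : Γ → ℂ := fun γ => if γ = 1 then 1 else 0

/-- `g` is a two-sided convolution inverse of `f` in `ℓ¹(Γ)`. -/
def IsL1Inverse (f g : Γ → ℝ) : Prop :=
  Summable g ∧ conv f g = deltaOne ∧ conv g f = deltaOne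

/-- View `f ∈ ℤΓ` as an element of `ℓ¹(Γ)`. -/
def fR (f : Γ →₀ ℤ) : Γ → ℝ := fun γ => (f γ : ℝ)

/-- View `f ∈ ℤΓ` as an element of `ℓ¹(Γ,ℂ)`. -/
def fCC (f : Γ →₀ ℤ) : Γ → ℂ := fun γ => (f γ : ℂ)

/-- The `ℓ¹`-norm `‖f‖₁` of `f ∈ ℤΓ`. -/
def finsuppL1 (f : Γ →₀ ℤ) : ℝ := f.sum fun _ c => |(c : ℝ)|

/-- The `ℓ¹`-norm of `h ∈ ℓ¹(Γ,ℂ)`. -/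
def l1normC (h : Γ → ℂ) : ℝ := ∑' γ : Γ, ‖h γ‖

/-- Coordinatewise reduction mod 1, `η : ℓ∞(Γ) → 𝕋^Γ`. -/
def etaT (w : Γ → ℝ) : Γ → Torus := fun γ => ((w γ : ℝ) : Torus)

/-- The map `ξ = η ∘ ρ_{w}` for `w ∈ ℓ¹(Γ)`. -/
def xiMap (w : Γ → ℝ) (v : Γ → ℝ) : Γ → Torus := etaT (rhoL1 w v)

/-- A point `x ∈ 𝕋^Γ` is homoclinic if `λ^γ x → 0` along the cofinite filter on `Γ`. -/
def IsHomoclinic (x : Γ → Torus) : Prop :=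
  Filter.Tendsto (fun γ : Γ => lsh γ x) Filter.cofinite (nhds 0)

/-- The set of `Γ'`-fixed points of `α_f` in `X_f`. -/
def FixSet (f : Γ →₀ ℤ) (Γ' : Subgroup Γ) : Set (Γ → Torus) :=
  {x | x ∈ XSet f ∧ ∀ γ ∈ Γ', lsh γ x = x}

/-- Left `(K,ε)`-invariance of a finite set `Q ⊆ Γ`. -/
def LeftInv [DecidableEq Γ] (K : Finset Γ) (ε : ℝ) (Q : Finset Γ) : Prop :=
  ∑ γ ∈ K, (((Q.image fun q => γ * q) ∆ Q).card : ℝ) / (Q.card : ℝ) < ε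

/-- Right `(K,ε)`-invariance of a finite set `Q ⊆ Γ`. -/
def RightInv [DecidableEq Γ] (K : Finset Γ) (ε : ℝ) (Q : Finset Γ) : Prop :=
  ∑ γ ∈ K, (((Q.image fun q => q * γ) ∆ Q).card : ℝ) / (Q.card : ℝ) < ε

/-- Amenability: existence of a left Følner sequence. -/
def Amenable (Γ : Type*) [Group Γ] [DecidableEq Γ] : Prop :=
  ∃ Q : ℕ → Finset Γ, (∀ n, (Q n).Nonempty) ∧
    ∀ (K : Finset Γ) (ε : ℝ), 0 < ε → ∃ N : ℕ, ∀ n ≥ N, LeftInv K ε (Q n)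

/-- Residual finiteness: there is a sequence of finite-index normal subgroups with
trivial intersection. -/
def ResFinite (Γ : Type*) [Group Γ] : Prop :=
  ∃ N : ℕ → Subgroup Γ, (∀ n, (N n).Normal ∧ (N n).FiniteIndex) ∧
    ∀ γ : Γ, (∀ n, γ ∈ N n) → γ = 1

/-- `Q` is a fundamental domain for the coset space `Γ/Γ'`:
`{γQ : γ ∈ Γ'}` is a partition of `Γ`. -/
def IsFundDomain (Γ' : Subgroup Γ) (Q : Finset Γ) : Prop :=
  ∀ x : Γ, ∃! p : Γ × Γ, p.1 ∈ Γ' ∧ p.2 ∈ Q ∧ p.1 * p.2 = x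

/-- `lim_n Γ_n = {1}`: for every finite `K ⊆ Γ` eventually `Γ_n ∩ K⁻¹K = {1}`. -/
def LimTriv (N : ℕ → Subgroup Γ) : Prop :=
  ∀ K : Finset Γ, ∃ M : ℕ, ∀ n ≥ M, ∀ γ ∈ N n, (∃ a ∈ K, ∃ b ∈ K, γ = a⁻¹ * b) → γ = 1

/-- The word ball `B_F(n)` of radius `n` with respect to a generating set `F`. -/
def BallF (F : Finset Γ) (n : ℕ) : Set Γ :=
  {γ | ∃ l : List Γ, l.length ≤ n ∧ (∀ a ∈ l, a ∈ F) ∧ l.prod = γ}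

end GroupDefs

/-- The Hilbert space `ℓ²(Γ,ℂ)`. -/
abbrev H2 (Γ : Type*) : Type _ := lp (fun _ : Γ => ℂ) 2

section Hilbert

variable {Γ : Type*} [Group Γ]

open Classical in
/-- The standard basis vector `δ₁ ∈ ℓ²(Γ,ℂ)`. -/
def deltaL2 : H2 Γ := lp.single 2 (1 : Γ) (1 : ℂ)

/-- `A` is the right-convolution operator `ρ_f` on `ℓ²(Γ,ℂ)`,
`(ρ_f w)_γ = Σ_{γ'} w_{γγ'} f_{γ'}`. -/
def IsRho (f : Γ → ℂ) (A : H2 Γ →L[ℂ] H2 Γ) : Prop :=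
  ∀ (w : H2 Γ) (γ : Γ), (A w : Γ → ℂ) γ = ∑' γ' : Γ, (w : Γ → ℂ) (γ * γ') * f γ'

/-- The von Neumann trace of `log (A A*)`, i.e. `tr_{NΓ}(log (A A*)) = (log(AA*) δ₁)(1)`,
where `log` is given by the continuous functional calculus. -/
def trLogAAstar (A : H2 Γ →L[ℂ] H2 Γ) : ℝ :=
  (((cfc (instCFC := IsSelfAdjoint.instContinuousFunctionalCalculus) Real.log (A * star A)) deltaL2 : Γ → ℂ) (1 : Γ)).re

/-- The Fuglede–Kadison determinant `det_{NΓ} A = exp(½ tr(log (A A*)))`. -/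
def detFK (A : H2 Γ →L[ℂ] H2 Γ) : ℝ := Real.exp (2⁻¹ * trLogAAstar A)

open Classical in
/-- `f^{(n)} : Γ/Γ_n → ℂ`, integration along the fibres: `f^{(n)}(δ) = Σ_{γ ∈ δ} f_γ`. -/
def fQuot (f : Γ → ℂ) (H : Subgroup Γ) : (Γ ⧸ H) → ℂ :=
  fun δ => ∑' γ : Γ, if (QuotientGroup.mk γ : Γ ⧸ H) = δ then f γ else 0

open Classical in
/-- The indicator of the identity coset in `ℓ²(Γ/Γ_n, ℂ)`. -/
def deltaQuot (H : Subgroup Γ) : (Γ ⧸ H) → ℂ :=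
  fun δ => if δ = (QuotientGroup.mk (1 : Γ) : Γ ⧸ H) then 1 else 0

end Hilbert



section MainAux

variable {Γ : Type*} [Group Γ]

private lemma torus_intCast (k : ℤ) : (((k : ℝ)) : Torus) = 0 := by
  rw [AddCircle.coe_eq_zero_iff]; exact ⟨k, by simp⟩

/-- The reduction mod 1 as an additive group hom. -/
private def phiT : ℝ →+ Torus := QuotientAddGroup.mk' _

private lemma phiT_apply (r : ℝ) : phiT r = (r : Torus) := rfl

private lemma summable_bdd_mul {w u : Γ → ℝ} (hw : Summable w) {C : ℝ}
    (hu : ∀ γ, |u γ| ≤ C) : Summable fun γ => u γ * w γ := by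
  refine Summable.of_abs (Summable.of_nonneg_of_le (fun γ => abs_nonneg _)
    (fun γ => ?_) (hw.abs.mul_left C))
  rw [abs_mul]
  exact mul_le_mul_of_nonneg_right (hu γ) (abs_nonneg _)

private lemma rhoT_apply (f : Γ →₀ ℤ) (x : Γ → Torus) (γ' : Γ) :
    rhoT f x γ' = ∑ γ ∈ f.support, f γ • x (γ' * γ) := rfl

private lemma rhoInf_apply (f : Γ →₀ ℤ) (u : Γ → ℝ) (γ : Γ) :
    rhoInf f u γ = ∑ γ' ∈ f.support, (f γ' : ℝ) * u (γ * γ') := rfl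

private lemma lsh_lsh (a b : Γ) (x : Γ → Torus) : lsh a (lsh b x) = lsh (a * b) x := by
  funext γ; simp [lsh, mul_inv_rev, mul_assoc]

private lemma lsh_mem_XSet {f : Γ →₀ ℤ} {x : Γ → Torus} (hx : x ∈ XSet f) (δ : Γ) :
    lsh δ x ∈ XSet f := by
  funext γ'
  have := congrFun hx (δ⁻¹ * γ')
  simpa [rhoT_apply, lsh, mul_assoc] using this

private lemma lsh_homoclinic {x : Γ → Torus} (hx : IsHomoclinic x) (δ : Γ) :
    IsHomoclinic (lsh δ x) := by
  have h1 : (fun γ : Γ => lsh γ (lsh δ x)) = (fun β : Γ => lsh β x) ∘ (fun γ : Γ => γ * δ) := by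
    funext γ; simp [Function.comp, lsh_lsh]
  rw [IsHomoclinic, h1]
  exact hx.comp (mul_left_injective δ).tendsto_cofinite

/-- The homoclinic subgroup of `X_f`. -/
private def homSub (f : Γ →₀ ℤ) : AddSubgroup (Γ → Torus) where
  carrier := {x | x ∈ XSet f ∧ IsHomoclinic x}
  zero_mem' := by
    constructor
    · funext γ'; simp [rhoT_apply]
    · have : (fun γ : Γ => lsh γ (0 : Γ → Torus)) = fun _ => (0 : Γ → Torus) := by
        funext γ γ'; simp [lsh]
      rw [IsHomoclinic, this]
      exact tendsto_const_nhds
  add_mem' := by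
    rintro x y ⟨hx1, hx2⟩ ⟨hy1, hy2⟩
    constructor
    · funext γ'
      have h1 := congrFun hx1 γ'
      have h2 := congrFun hy1 γ'
      simp only [rhoT_apply, Pi.add_apply, Pi.zero_apply, smul_add] at *
      rw [Finset.sum_add_distrib, h1, h2, add_zero]
    · have h3 : (fun γ : Γ => lsh γ (x + y)) = fun γ : Γ => lsh γ x + lsh γ y := by
        funext γ γ'; simp [lsh]
      rw [IsHomoclinic, h3]
      simpa using hx2.add hy2
  neg_mem' := by
    rintro x ⟨hx1, hx2⟩
    constructor
    · funext γ'
      have h1 := congrFun hx1 γ'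
      simp only [rhoT_apply, Pi.neg_apply, Pi.zero_apply, smul_neg] at *
      rw [Finset.sum_neg_distrib, h1, neg_zero]
    · have h3 : (fun γ : Γ => lsh γ (-x)) = fun γ : Γ => -(lsh γ x) := by
        funext γ γ'; simp [lsh]
      rw [IsHomoclinic, h3]
      simpa using hx2.neg

private lemma conv_fw_eq (f : Γ →₀ ℤ) (w : Γ → ℝ) (β : Γ) :
    conv (fR f) w β = ∑ δ ∈ f.support, (f δ : ℝ) * w (δ⁻¹ * β) := by
  refine tsum_eq_sum ?_
  intro δ hδ
  have : f δ = 0 := Finsupp.notMem_support_iff.mp hδ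
  simp [fR, this]

private lemma conv_wf_eq (f : Γ →₀ ℤ) (w : Γ → ℝ) (β : Γ) :
    conv w (fR f) β = ∑ δ ∈ f.support, (f δ : ℝ) * w (β * δ⁻¹) := by
  classical
  have h1 : conv w (fR f) β = ∑ γ' ∈ f.support.image (fun δ => β * δ⁻¹),
      w γ' * fR f (γ'⁻¹ * β) := by
    refine tsum_eq_sum ?_
    intro γ' hγ'
    have : f (γ'⁻¹ * β) = 0 := by
      by_contra hne
      apply hγ'
      refine Finset.mem_image.mpr ⟨γ'⁻¹ * β, Finsupp.mem_support_iff.mpr hne, ?_⟩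
      group
    simp [fR, this]
  rw [h1, Finset.sum_image (fun a _ b _ h => by
    have := congrArg (fun z => β⁻¹ * z) h
    simpa using this)]
  refine Finset.sum_congr rfl fun δ _ => ?_
  have : (β * δ⁻¹)⁻¹ * β = δ := by group
  rw [this, mul_comm]
  rfl

private lemma x_mem_XSet (f : Γ →₀ ℤ) (w : Γ → ℝ) (hw : IsL1Inverse (fR f) w) :
    etaT (fun γ : Γ => w γ⁻¹) ∈ XSet f := by
  funext γ'
  have key : rhoT f (etaT fun γ : Γ => w γ⁻¹) γ'
      = phiT (∑ γ ∈ f.support, (f γ : ℝ) * w (γ⁻¹ * γ'⁻¹)) := by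
    rw [map_sum, rhoT_apply]
    refine Finset.sum_congr rfl fun γ _ => ?_
    have e1 : etaT (fun γ : Γ => w γ⁻¹) (γ' * γ) = phiT (w (γ⁻¹ * γ'⁻¹)) := by
      simp [etaT, phiT_apply, mul_inv_rev]
    rw [e1, ← AddMonoidHom.map_zsmul, zsmul_eq_mul]
  rw [key, ← conv_fw_eq, hw.2.1]
  by_cases h1 : γ'⁻¹ = (1 : Γ)
  · have : phiT (deltaOne γ'⁻¹) = phiT ((1 : ℤ) : ℝ) := by simp [deltaOne, h1]
    rw [this, phiT_apply, torus_intCast]; rfl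
  · have : phiT (deltaOne γ'⁻¹) = phiT 0 := by simp [deltaOne, h1]
    rw [this, map_zero]; rfl

private lemma x_homoclinic (f : Γ →₀ ℤ) (w : Γ → ℝ) (hw : IsL1Inverse (fR f) w) :
    IsHomoclinic (etaT fun γ : Γ => w γ⁻¹) := by
  rw [IsHomoclinic, tendsto_pi_nhds]
  intro γ'
  have h1 : (fun γ : Γ => lsh γ (etaT fun γ'' : Γ => w γ''⁻¹) γ')
      = (fun r : ℝ => (r : Torus)) ∘ w ∘ (fun γ : Γ => γ'⁻¹ * γ) := by
    funext γ; simp [lsh, etaT, mul_inv_rev, Function.comp]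
  rw [h1]
  have h2 : Filter.Tendsto w Filter.cofinite (nhds 0) := hw.1.tendsto_cofinite_zero
  have h3 : Filter.Tendsto (fun r : ℝ => (r : Torus)) (nhds 0) (nhds 0) := by
    have := (AddCircle.continuous_mk' (1 : ℝ)).tendsto (0 : ℝ)
    simpa using this
  exact (h3.comp h2).comp (mul_right_injective γ'⁻¹).tendsto_cofinite

end MainAux

/-- Let `Γ` be a countable residually finite discrete group and
`f ∈ ℤΓ` such that `α_f` is expansive, i.e. `f` is invertible in `ℓ¹(Γ)` with inverse
`w = w_f^Δ`. Then `x_f^Δ = η(w*) ∈ X_f` is a fundamental homoclinic point of `α_f`: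
it is homoclinic, and the homoclinic group `Δ(X_f)` is generated by its orbit. -/
theorem statement3 {Γ : Type*} [Group Γ] [Countable Γ] (hRF : ResFinite Γ)
    (f : Γ →₀ ℤ) (w : Γ → ℝ) (hw : IsL1Inverse (fR f) w) :
    etaT (fun γ : Γ => w γ⁻¹) ∈ XSet f ∧
    IsHomoclinic (etaT fun γ : Γ => w γ⁻¹) ∧
    (AddSubgroup.closure
        (Set.range fun γ : Γ => lsh γ (etaT fun γ' : Γ => w γ'⁻¹)) : Set (Γ → Torus)) =
      {x | x ∈ XSet f ∧ IsHomoclinic x} := by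
  classical
  set xpt : Γ → Torus := etaT (fun γ : Γ => w γ⁻¹) with hxpt
  have hxX : xpt ∈ XSet f := x_mem_XSet f w hw
  have hxH : IsHomoclinic xpt := x_homoclinic f w hw
  refine ⟨hxX, hxH, ?_⟩
  have hforward : AddSubgroup.closure
      (Set.range fun γ : Γ => lsh γ xpt) ≤ homSub f := by
    rw [AddSubgroup.closure_le]
    rintro - ⟨γ, rfl⟩
    exact ⟨lsh_mem_XSet hxX γ, lsh_homoclinic hxH γ⟩
  refine Set.Subset.antisymm hforward ?_
  rintro y ⟨hy1, hy2⟩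
  -- the lift of `y` with values in `(-1/2, 1/2]`
  set vt : Γ → ℝ := fun γ => ((AddCircle.equivIoc 1 (-(1/2)) (y γ) : Set.Ioc _ _) : ℝ) with hvt
  have heta : ∀ γ : Γ, ((vt γ : ℝ) : Torus) = y γ := fun γ =>
    (AddCircle.equivIoc 1 (-(1/2))).symm_apply_apply (y γ)
  have hbdd : ∀ γ : Γ, |vt γ| ≤ 1 := by
    intro γ
    have h := (AddCircle.equivIoc 1 (-(1/2)) (y γ)).2
    rw [abs_le]
    constructor
    · linarith [h.1]
    · linarith [h.2]
  -- `y` tends to 0 coordinatewise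
  have hy0 : Filter.Tendsto y Filter.cofinite (nhds 0) := by
    have h1 := (tendsto_pi_nhds.mp hy2) 1
    have h2 : Filter.Tendsto (fun γ : Γ => y γ⁻¹) Filter.cofinite (nhds 0) := by
      have : (fun γ : Γ => lsh γ y 1) = fun γ : Γ => y γ⁻¹ := by
        funext γ; simp [lsh]
      rw [this] at h1; simpa using h1
    have h3 := h2.comp (inv_injective : Function.Injective (fun γ : Γ => γ⁻¹)).tendsto_cofinite
    have h4 : ((fun γ : Γ => y γ⁻¹) ∘ fun γ : Γ => γ⁻¹) = y := by funext γ; simp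
    rw [← h4]; exact h3
  -- hence the lift tends to 0
  have hne0 : ((0 : Torus)) ≠ ((-(1/2) : ℝ) : Torus) := by
    intro h
    rw [eq_comm, AddCircle.coe_eq_zero_iff] at h
    obtain ⟨n, hn⟩ := h
    simp only [zsmul_eq_mul, mul_one] at hn
    have h2 : ((2*n : ℤ) : ℝ) = ((-1 : ℤ) : ℝ) := by push_cast; linarith
    have := (Int.cast_injective h2 : (2*n : ℤ) = -1)
    omega
  have heq0 : AddCircle.equivIoc (1:ℝ) (-(1/2)) 0 = ⟨0, by constructor <;> norm_num⟩ := by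
    rw [Equiv.apply_eq_iff_eq_symm_apply]
    show (0:Torus) = ((0:ℝ):Torus)
    norm_num
  have htv : Filter.Tendsto vt Filter.cofinite (nhds 0) := by
    have hc : ContinuousAt (AddCircle.equivIoc (1:ℝ) (-(1/2))) 0 :=
      AddCircle.continuousAt_equivIoc (1:ℝ) (-(1/2)) hne0
    have h4 : Filter.Tendsto (fun γ : Γ => AddCircle.equivIoc (1:ℝ) (-(1/2)) (y γ))
        Filter.cofinite (nhds (AddCircle.equivIoc (1:ℝ) (-(1/2)) 0)) := hc.tendsto.comp hy0
    have h5 := (continuous_subtype_val.tendsto _).comp h4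
    rw [heq0] at h5
    exact h5
  -- v := ρ_f (vt) is integer valued, tends to 0, hence finitely supported
  set v : Γ → ℝ := rhoInf f vt with hv
  have hint : ∀ γ : Γ, ∃ k : ℤ, v γ = (k : ℝ) := by
    intro γ
    have h1 : rhoT f y γ = 0 := by
      have := congrFun hy1 γ; simpa using this
    have h2 : rhoT f y γ = phiT (v γ) := by
      rw [hv, rhoInf_apply, map_sum, rhoT_apply]
      refine Finset.sum_congr rfl fun δ _ => ?_
      have e1 : y (γ * δ) = phiT (vt (γ * δ)) := by rw [phiT_apply, heta]
      rw [e1, ← AddMonoidHom.map_zsmul, zsmul_eq_mul]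
    rw [h2] at h1
    rw [phiT_apply, AddCircle.coe_eq_zero_iff] at h1
    obtain ⟨n, hn⟩ := h1
    exact ⟨n, by simpa using hn.symm⟩
  have htv2 : Filter.Tendsto v Filter.cofinite (nhds 0) := by
    have : v = fun γ => ∑ δ ∈ f.support, (f δ : ℝ) * vt (γ * δ) := by
      funext γ; rw [hv, rhoInf_apply]
    rw [this]
    have h0 : (0 : ℝ) = ∑ δ ∈ f.support, (0 : ℝ) := by simp
    rw [h0]
    refine tendsto_finset_sum _ fun δ _ => ?_
    have h6 : Filter.Tendsto (fun γ : Γ => vt (γ * δ)) Filter.cofinite (nhds 0) :=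
      htv.comp (mul_left_injective δ).tendsto_cofinite
    simpa using h6.const_mul ((f δ : ℝ))
  have hfin : {γ : Γ | v γ ≠ 0}.Finite := by
    rw [← Filter.eventually_cofinite]
    have h7 : ∀ᶠ γ in Filter.cofinite, v γ ∈ Set.Ioo (-1 : ℝ) 1 :=
      htv2 (Ioo_mem_nhds (by norm_num) (by norm_num))
    filter_upwards [h7] with γ hγ
    obtain ⟨k, hk⟩ := hint γ
    rw [hk] at hγ ⊢
    have : k = 0 := by
      rcases hγ with ⟨h8, h9⟩
      have : -1 < k := by exact_mod_cast h8
      have : k < 1 := by exact_mod_cast h9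
      omega
    simp [this]
  set T : Finset Γ := hfin.toFinset with hT
  -- key identity: vt = ρ_w v
  have hkey : ∀ γ : Γ, vt γ = ∑' γ' : Γ, v (γ * γ') * w γ' := by
    intro γ
    have hsum1 : ∀ δ : Γ, Summable fun γ' : Γ => (f δ : ℝ) * (vt (γ * (γ' * δ)) * w γ') :=
      fun δ => (summable_bdd_mul hw.1 (fun γ' => hbdd _)).mul_left _
    have hsum2 : ∀ δ : Γ, Summable fun β : Γ => (f δ : ℝ) * (vt (γ * β) * w (β * δ⁻¹)) := by
      intro δ
      have hwδ : Summable fun β : Γ => w (β * δ⁻¹) :=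
        hw.1.comp_injective (mul_left_injective δ⁻¹)
      exact (summable_bdd_mul hwδ (fun β => hbdd _)).mul_left _
    have step1 : ∀ γ' : Γ, v (γ * γ') * w γ'
        = ∑ δ ∈ f.support, (f δ : ℝ) * (vt (γ * (γ' * δ)) * w γ') := by
      intro γ'
      rw [hv, rhoInf_apply, Finset.sum_mul]
      refine Finset.sum_congr rfl fun δ _ => ?_
      rw [mul_assoc, mul_assoc]
    calc vt γ = ∑' β : Γ, vt (γ * β) * deltaOne β := by
            rw [tsum_eq_single (1 : Γ) (fun b hb => by simp [deltaOne, hb])]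
            simp [deltaOne]
      _ = ∑' β : Γ, ∑ δ ∈ f.support, (f δ : ℝ) * (vt (γ * β) * w (β * δ⁻¹)) := by
            refine tsum_congr fun β => ?_
            have h9 : deltaOne β = conv w (fR f) β := by rw [hw.2.2]
            rw [h9, conv_wf_eq, Finset.mul_sum]
            refine Finset.sum_congr rfl fun δ _ => ?_
            ring
      _ = ∑ δ ∈ f.support, ∑' β : Γ, (f δ : ℝ) * (vt (γ * β) * w (β * δ⁻¹)) :=
            Summable.tsum_finsetSum (fun δ _ => hsum2 δ)
      _ = ∑ δ ∈ f.support, ∑' γ' : Γ, (f δ : ℝ) * (vt (γ * (γ' * δ)) * w γ') := by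
            refine Finset.sum_congr rfl fun δ _ => ?_
            rw [← (Equiv.mulRight δ).tsum_eq
              (fun β => (f δ : ℝ) * (vt (γ * β) * w (β * δ⁻¹)))]
            refine tsum_congr fun γ' => ?_
            simp [Equiv.mulRight]
      _ = ∑' γ' : Γ, ∑ δ ∈ f.support, (f δ : ℝ) * (vt (γ * (γ' * δ)) * w γ') :=
            (Summable.tsum_finsetSum (fun δ _ => hsum1 δ)).symm
      _ = ∑' γ' : Γ, v (γ * γ') * w γ' := by
            refine tsum_congr fun γ' => ?_
            rw [step1 γ']
  -- finite representation
  have hrep : ∀ γ : Γ, vt γ = ∑ t ∈ T, v t * w (γ⁻¹ * t) := by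
    intro γ
    rw [hkey γ]
    have h10 : (∑' γ' : Γ, v (γ * γ') * w γ')
        = ∑ γ' ∈ T.image (fun t => γ⁻¹ * t), v (γ * γ') * w γ' := by
      refine tsum_eq_sum ?_
      intro γ' hγ'
      have : v (γ * γ') = 0 := by
        by_contra hne
        apply hγ'
        refine Finset.mem_image.mpr ⟨γ * γ', ?_, by group⟩
        rw [hT, Set.Finite.mem_toFinset]
        exact hne
      simp [this]
    rw [h10, Finset.sum_image (fun a _ b _ h => by
      have := congrArg (fun z => γ * z) h
      simpa using this)]
    refine Finset.sum_congr rfl fun t _ => ?_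
    have : γ * (γ⁻¹ * t) = t := by group
    rw [this]
  -- choose the integers
  choose k hk using hint
  -- conclude
  have hyeq : y = ∑ t ∈ T, k t • lsh t xpt := by
    funext γ
    have h11 : (∑ t ∈ T, k t • lsh t xpt) γ = ∑ t ∈ T, k t • (lsh t xpt γ) := by
      simp
    rw [h11, ← heta γ, ← phiT_apply, hrep γ, map_sum]
    refine Finset.sum_congr rfl fun t _ => ?_
    have h12 : lsh t xpt γ = phiT (w (γ⁻¹ * t)) := by
      simp [lsh, hxpt, etaT, phiT_apply, mul_inv_rev]
    rw [h12, ← AddMonoidHom.map_zsmul, zsmul_eq_mul, ← hk t]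

  rw [hyeq, SetLike.mem_coe]
  refine AddSubgroup.sum_mem _ fun t _ => ?_
  refine AddSubgroup.zsmul_mem _ (AddSubgroup.subset_closure ?_) _
  exact Set.mem_range.mpr ⟨t, rfl⟩


end
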